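/- Let α, a, t₁, t₂, t₃ ∈ ℝ and let ρ = (1/4)·(I⊗I + a·(σ₃⊗I) + a·(I⊗σ₃) + t₁·σ₁⊗σ₁ + t₂·σ₂⊗σ₂ + t₃·σ₃⊗σ₃) on ℂ²⊗ℂ². Let 𝓑 be the generalized Clauser–Horne operator with bias η_a = η_b = 0, unsharpness α_a = α, α_b = −α, and directions a⃗ = (0,0,1), a⃗' = (0,1,0), b⃗ = (0, 1/√2, −1/√2), b⃗' = (0, 1/√2, 1/√2). Writing ⟨X⟩ = Tr(ρ·X), the third cumulant κ₃ = ⟨𝓑³⟩ − 3⟨𝓑⟩⟨𝓑²⟩ + 2⟨𝓑⟩³ equals −(√2·α⁶/16)·(t₂ − t₃)·((t₂ − t₃)² − 3·t₁ − 1); in particular |κ₃| = (√2·α⁶/16)·|(t₂ − t₃)·((t₂ − t₃)² − 3·t₁ − 1)|, independently of a. -/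

import Mathlib

open Matrix Kronecker

noncomputable section

/-- The Pauli matrix σ₁. -/
def σ1 : Matrix (Fin 2) (Fin 2) ℂ := !![0, 1; 1, 0]

/-- The Pauli matrix σ₂. -/
def σ2 : Matrix (Fin 2) (Fin 2) ℂ := !![0, -Complex.I; Complex.I, 0]

/-- The Pauli matrix σ₃. -/
def σ3 : Matrix (Fin 2) (Fin 2) ℂ := !![1, 0; 0, -1]

/-- `σ · n = n₁σ₁ + n₂σ₂ + n₃σ₃` for a real vector `n ∈ ℝ³`. -/
def pauliDot (n : Fin 3 → ℝ) : Matrix (Fin 2) (Fin 2) ℂ :=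
  (n 0 : ℂ) • σ1 + (n 1 : ℂ) • σ2 + (n 2 : ℂ) • σ3

/-- Biased unsharp POVM element `E₊(n) = ((1+η)·I + α·σ·n)/2`. -/
def Eplus (η α : ℝ) (n : Fin 3 → ℝ) : Matrix (Fin 2) (Fin 2) ℂ :=
  ((1 / 2 : ℝ) : ℂ) • (((1 + η : ℝ) : ℂ) • (1 : Matrix (Fin 2) (Fin 2) ℂ)
    + (α : ℂ) • pauliDot n)

/-- The generalized Clauser–Horne operator on ℂ²⊗ℂ². -/
def CHop (ηa ηb αa αb : ℝ) (a a' b b' : Fin 3 → ℝ) :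
    Matrix (Fin 2 × Fin 2) (Fin 2 × Fin 2) ℂ :=
  Eplus ηa αa a ⊗ₖ Eplus ηb αb b - Eplus ηa αa a ⊗ₖ Eplus ηb αb b'
    + Eplus ηa αa a' ⊗ₖ Eplus ηb αb b + Eplus ηa αa a' ⊗ₖ Eplus ηb αb b'
    - ((1 + ηb : ℝ) : ℂ) • (Eplus ηa αa a' ⊗ₖ (1 : Matrix (Fin 2) (Fin 2) ℂ))
    - ((1 + ηa : ℝ) : ℂ) • ((1 : Matrix (Fin 2) (Fin 2) ℂ) ⊗ₖ Eplus ηb αb b)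
    + ((((1 + ηa) * (1 + ηb) - |αa * αb|) / 2 : ℝ) : ℂ) •
        (1 : Matrix (Fin 2 × Fin 2) (Fin 2 × Fin 2) ℂ)

end

noncomputable section

/-- The symmetric two-qubit X-state
`ρ = (I⊗I + a·σ₃⊗I + a·I⊗σ₃ + t₁·σ₁⊗σ₁ + t₂·σ₂⊗σ₂ + t₃·σ₃⊗σ₃)/4`. -/
def rhoX (a t1 t2 t3 : ℝ) : Matrix (Fin 2 × Fin 2) (Fin 2 × Fin 2) ℂ :=
  ((1 / 4 : ℝ) : ℂ) •
    ((1 : Matrix (Fin 2) (Fin 2) ℂ) ⊗ₖ (1 : Matrix (Fin 2) (Fin 2) ℂ)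
      + (a : ℂ) • (σ3 ⊗ₖ (1 : Matrix (Fin 2) (Fin 2) ℂ))
      + (a : ℂ) • ((1 : Matrix (Fin 2) (Fin 2) ℂ) ⊗ₖ σ3)
      + (t1 : ℂ) • (σ1 ⊗ₖ σ1) + (t2 : ℂ) • (σ2 ⊗ₖ σ2) + (t3 : ℂ) • (σ3 ⊗ₖ σ3))

/-- The generalized CH operator with bias `0`, unsharpness `α, −α`, and directions
`a⃗ = (0,0,1)`, `a⃗' = (0,1,0)`, `b⃗ = (0, 1/√2, −1/√2)`, `b⃗' = (0, 1/√2, 1/√2)`. -/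
def BopX (α : ℝ) : Matrix (Fin 2 × Fin 2) (Fin 2 × Fin 2) ℂ :=
  CHop 0 0 α (-α) ![0, 0, 1] ![0, 1, 0]
    ![0, 1 / Real.sqrt 2, -(1 / Real.sqrt 2)] ![0, 1 / Real.sqrt 2, 1 / Real.sqrt 2]

end

noncomputable section AuxCH
open Matrix Kronecker

def PX1 : Matrix (Fin 2 × Fin 2) (Fin 2 × Fin 2) ℂ := σ1 ⊗ₖ σ1
def PX2 : Matrix (Fin 2 × Fin 2) (Fin 2 × Fin 2) ℂ := σ2 ⊗ₖ σ2
def PX3 : Matrix (Fin 2 × Fin 2) (Fin 2 × Fin 2) ℂ := σ3 ⊗ₖ σ3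

lemma s11 : σ1 * σ1 = 1 := by
  ext i j; fin_cases i <;> fin_cases j <;>
    simp [σ1, Matrix.mul_apply, Fin.sum_univ_two, Matrix.one_apply]
lemma s22 : σ2 * σ2 = 1 := by
  ext i j; fin_cases i <;> fin_cases j <;>
    simp [σ2, Matrix.mul_apply, Fin.sum_univ_two, Matrix.one_apply, Complex.I_mul_I]
lemma s33 : σ3 * σ3 = 1 := by
  ext i j; fin_cases i <;> fin_cases j <;>
    simp [σ3, Matrix.mul_apply, Fin.sum_univ_two, Matrix.one_apply]
lemma s12 : σ1 * σ2 = Complex.I • σ3 := by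
  ext i j; fin_cases i <;> fin_cases j <;>
    simp [σ1, σ2, σ3, Matrix.mul_apply, Fin.sum_univ_two, Matrix.smul_apply]
lemma s21 : σ2 * σ1 = (-Complex.I) • σ3 := by
  ext i j; fin_cases i <;> fin_cases j <;>
    simp [σ1, σ2, σ3, Matrix.mul_apply, Fin.sum_univ_two, Matrix.smul_apply]
lemma s23 : σ2 * σ3 = Complex.I • σ1 := by
  ext i j; fin_cases i <;> fin_cases j <;>
    simp [σ1, σ2, σ3, Matrix.mul_apply, Fin.sum_univ_two, Matrix.smul_apply]
lemma s32 : σ3 * σ2 = (-Complex.I) • σ1 := by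
  ext i j; fin_cases i <;> fin_cases j <;>
    simp [σ1, σ2, σ3, Matrix.mul_apply, Fin.sum_univ_two, Matrix.smul_apply]
lemma s31 : σ3 * σ1 = Complex.I • σ2 := by
  ext i j; fin_cases i <;> fin_cases j <;>
    simp [σ1, σ2, σ3, Matrix.mul_apply, Fin.sum_univ_two, Matrix.smul_apply]
lemma s13 : σ1 * σ3 = (-Complex.I) • σ2 := by
  ext i j; fin_cases i <;> fin_cases j <;>
    simp [σ1, σ2, σ3, Matrix.mul_apply, Fin.sum_univ_two, Matrix.smul_apply]
lemma trs1 : σ1.trace = 0 := by simp [σ1, Matrix.trace_fin_two]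
lemma trs2 : σ2.trace = 0 := by simp [σ2, Matrix.trace_fin_two]
lemma trs3 : σ3.trace = 0 := by simp [σ3, Matrix.trace_fin_two]
lemma PX11 : PX1 * PX1 = 1 := by
  rw [PX1, ← Matrix.mul_kronecker_mul, s11, Matrix.one_kronecker_one]
lemma PX22 : PX2 * PX2 = 1 := by
  rw [PX2, ← Matrix.mul_kronecker_mul, s22, Matrix.one_kronecker_one]
lemma PX33 : PX3 * PX3 = 1 := by
  rw [PX3, ← Matrix.mul_kronecker_mul, s33, Matrix.one_kronecker_one]
lemma PX23 : PX2 * PX3 = -PX1 := by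
  rw [PX2, PX3, ← Matrix.mul_kronecker_mul, s23, PX1]
  rw [Matrix.smul_kronecker, Matrix.kronecker_smul, smul_smul, Complex.I_mul_I, neg_one_smul]
lemma PX32 : PX3 * PX2 = -PX1 := by
  rw [PX2, PX3, ← Matrix.mul_kronecker_mul, s32, PX1]
  rw [Matrix.smul_kronecker, Matrix.kronecker_smul, smul_smul, neg_mul_neg,
    Complex.I_mul_I, neg_one_smul]
lemma PX12 : PX1 * PX2 = -PX3 := by
  rw [PX1, PX2, ← Matrix.mul_kronecker_mul, s12, PX3]
  rw [Matrix.smul_kronecker, Matrix.kronecker_smul, smul_smul, Complex.I_mul_I, neg_one_smul]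
lemma PX13 : PX1 * PX3 = -PX2 := by
  rw [PX1, PX3, ← Matrix.mul_kronecker_mul, s13, PX2]
  rw [Matrix.smul_kronecker, Matrix.kronecker_smul, smul_smul, neg_mul_neg,
    Complex.I_mul_I, neg_one_smul]

lemma trRho (a t1 t2 t3 : ℝ) : (rhoX a t1 t2 t3).trace = 1 := by
  simp [rhoX, Matrix.trace_add, Matrix.trace_smul, Matrix.trace_kronecker,
    trs1, trs2, trs3, Matrix.trace_one]
lemma trRho1 (a t1 t2 t3 : ℝ) : (rhoX a t1 t2 t3 * PX1).trace = t1 := by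
  simp [rhoX, PX1, Matrix.add_mul, smul_mul_assoc, ← Matrix.mul_kronecker_mul,
    s11, s21, s31, Matrix.one_kronecker_one, Matrix.smul_kronecker,
    Matrix.kronecker_smul, Matrix.trace_add, Matrix.trace_smul,
    Matrix.trace_kronecker, trs1, trs2, trs3, Matrix.trace_one, smul_smul]
  ring
lemma trRho2 (a t1 t2 t3 : ℝ) : (rhoX a t1 t2 t3 * PX2).trace = t2 := by
  simp [rhoX, PX2, Matrix.add_mul, smul_mul_assoc, ← Matrix.mul_kronecker_mul,
    s12, s22, s32, Matrix.one_kronecker_one, Matrix.smul_kronecker,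
    Matrix.kronecker_smul, Matrix.trace_add, Matrix.trace_smul,
    Matrix.trace_kronecker, trs1, trs2, trs3, Matrix.trace_one, smul_smul]
  ring
lemma trRho3 (a t1 t2 t3 : ℝ) : (rhoX a t1 t2 t3 * PX3).trace = t3 := by
  simp [rhoX, PX3, Matrix.add_mul, smul_mul_assoc, ← Matrix.mul_kronecker_mul,
    s13, s23, s33, Matrix.one_kronecker_one, Matrix.smul_kronecker,
    Matrix.kronecker_smul, Matrix.trace_add, Matrix.trace_smul,
    Matrix.trace_kronecker, trs1, trs2, trs3, Matrix.trace_one, smul_smul]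
  ring
set_option maxHeartbeats 2000000 in
lemma B_eq (α : ℝ) : BopX α
    = (-(α:ℂ)^2/2) • (1 : Matrix (Fin 2 × Fin 2) (Fin 2 × Fin 2) ℂ)
      + ((α:ℂ)^2 * (Real.sqrt 2 : ℝ)/4) • PX3
      - ((α:ℂ)^2 * (Real.sqrt 2 : ℝ)/4) • PX2 := by
  have h2 : ((Real.sqrt 2 : ℝ) : ℂ) * ((Real.sqrt 2 : ℝ) : ℂ) = 2 := by
    norm_cast
    exact Real.mul_self_sqrt (by norm_num)
  have hne : ((Real.sqrt 2 : ℝ) : ℂ) ≠ 0 := by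
    simpa using (Real.sqrt_ne_zero').mpr (by norm_num : (0:ℝ) < 2)
  have hinv : ((Real.sqrt 2 : ℝ) : ℂ)⁻¹ = ((Real.sqrt 2 : ℝ) : ℂ) / 2 := by
    rw [inv_eq_one_div, div_eq_div_iff hne (by norm_num : (2:ℂ) ≠ 0), one_mul]
    exact h2.symm
  have habs : |α * -α| = α ^ 2 := by
    rw [abs_mul, abs_neg, ← abs_mul, abs_mul_self]
    ring
  ext ⟨i, j⟩ ⟨k, l⟩
  fin_cases i <;> fin_cases j <;> fin_cases k <;> fin_cases l <;>
    · simp [BopX, CHop, Eplus, pauliDot, PX2, PX3, σ1, σ2, σ3, habs, hinv,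
        Matrix.kroneckerMap_apply, Matrix.one_apply, Matrix.smul_apply,
        Matrix.add_apply, Matrix.sub_apply, Complex.ofReal_div, Complex.ofReal_inv,
        one_div, Complex.I_sq, Complex.I_mul_I, Prod.ext_iff]
      try push_cast
      try ring
      try rw [Complex.I_sq]
      try push_cast
      try ring
end AuxCH
noncomputable section

/-- The third cumulant `κ₃ = ⟨𝓑³⟩ − 3⟨𝓑⟩⟨𝓑²⟩ + 2⟨𝓑⟩³` of the generalized CH
operator in the X-state, with `⟨X⟩ = Tr(ρ·X)`. -/
def kappa3X (α a t1 t2 t3 : ℝ) : ℂ :=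
  Matrix.trace (rhoX a t1 t2 t3 * BopX α ^ 3)
    - 3 * Matrix.trace (rhoX a t1 t2 t3 * BopX α) *
        Matrix.trace (rhoX a t1 t2 t3 * BopX α ^ 2)
    + 2 * Matrix.trace (rhoX a t1 t2 t3 * BopX α) ^ 3

/-- Third cumulant of the CH operator in the X-state:
`κ₃ = −(√2·α⁶/16)·(t₂−t₃)·((t₂−t₃)²−3t₁−1)`, independently of `a`; in particular
`|κ₃| = (√2·α⁶/16)·|(t₂−t₃)·((t₂−t₃)²−3t₁−1)|`. -/
theorem xstate_CH_third_cumulant (α a t1 t2 t3 : ℝ) :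
    kappa3X α a t1 t2 t3
      = ((-(Real.sqrt 2 * α ^ 6 / 16) *
          ((t2 - t3) * ((t2 - t3) ^ 2 - 3 * t1 - 1)) : ℝ) : ℂ) ∧
    ‖kappa3X α a t1 t2 t3‖
      = Real.sqrt 2 * α ^ 6 / 16 * |(t2 - t3) * ((t2 - t3) ^ 2 - 3 * t1 - 1)| := by
  have h2 : ((Real.sqrt 2 : ℝ) : ℂ) * ((Real.sqrt 2 : ℝ) : ℂ) = 2 := by
    norm_cast
    exact Real.mul_self_sqrt (by norm_num)
  have hmain : kappa3X α a t1 t2 t3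
      = ((-(Real.sqrt 2 * α ^ 6 / 16) *
          ((t2 - t3) * ((t2 - t3) ^ 2 - 3 * t1 - 1)) : ℝ) : ℂ) := by
    unfold kappa3X
    rw [B_eq]
    simp only [pow_succ, pow_zero, Matrix.one_mul]
    simp [Matrix.add_mul, Matrix.sub_mul, Matrix.mul_add, Matrix.mul_sub,
      Matrix.smul_mul, Matrix.mul_smul, smul_smul, Matrix.mul_one, Matrix.one_mul,
      PX11, PX22, PX33, PX23, PX32, PX12, PX13, Matrix.mul_neg, Matrix.neg_mul,
      smul_neg, Matrix.trace_add, Matrix.trace_sub, Matrix.trace_neg,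
      Matrix.trace_smul, trRho, trRho1, trRho2, trRho3, smul_eq_mul]
    push_cast
    linear_combination (-(((α : ℂ)) ^ 6 * ((Real.sqrt 2 : ℝ) : ℂ) / 32) *
      (((t2 : ℂ) - (t3 : ℂ)) * (((t2 : ℂ) - (t3 : ℂ)) ^ 2 - 3 * (t1 : ℂ) - 1))) * h2
  refine ⟨hmain, ?_⟩
  rw [hmain, Complex.norm_real, Real.norm_eq_abs, neg_mul, abs_neg, abs_mul]
  congr 1
  rw [abs_of_nonneg]
  positivity

end
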